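/- arXiv:1512.08135 — 2 statements merged into one kernel-verified Lean document; each statement's English description precedes it below -/
import Mathlib

section
/- The kernel polynomial minimizer ρ̂_k(t) = (Σ_{j=0}^k T̂ⱼ(γ)T̂ⱼ(t)) / (Σ_{j=0}^k T̂ⱼ(γ)²) is the unique polynomial of degree at most k with ρ̂_k(γ) = 1 that minimizes the Chebyshev L²-norm ‖r‖_w over all polynomials r of degree ≤ k with r(γ) = 1. -/
open Real Polynomial Finset

noncomputable def ThatP (j : ℕ) : Polynomial ℝ :=
  if j = 0 then Polynomial.C (Real.sqrt Real.pi)⁻¹ * Polynomial.Chebyshev.T ℝ (j : ℤ)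
  else Polynomial.C (Real.sqrt (Real.pi / 2))⁻¹ * Polynomial.Chebyshev.T ℝ (j : ℤ)

noncomputable def chebNorm (p : Polynomial ℝ) : ℝ :=
  Real.sqrt (∫ t in (-1:ℝ)..1, (p.eval t) ^ 2 / Real.sqrt (1 - t ^ 2))

noncomputable def rhoHat (k : ℕ) (γ : ℝ) : Polynomial ℝ :=
  Polynomial.C (∑ j ∈ Finset.range (k + 1), (ThatP j).eval γ ^ 2)⁻¹ *
    ∑ j ∈ Finset.range (k + 1), Polynomial.C ((ThatP j).eval γ) * ThatP j

section Helpers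

open intervalIntegral MeasureTheory Set Interval

lemma poly_div_sqrt_intable (q : ℝ[X]) :
    IntervalIntegrable (fun t => q.eval t / √(1 - t^2)) volume (-1) 1 := by
  obtain ⟨M, hM⟩ := (isCompact_Icc (a := (-1:ℝ)) (b := 1)).exists_bound_of_continuousOn
    (q.continuous.continuousOn (s := Icc (-1) 1))
  have hM0 : 0 ≤ M := le_trans (norm_nonneg _) (hM 0 (by norm_num))
  have hmeas : ∀ a b : ℝ, AEStronglyMeasurable (fun t => q.eval t / √(1 - t^2))
      (volume.restrict (Ι a b)) := by
    intro a b
    exact ((q.continuous.measurable.div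
      ((continuous_const.sub (continuous_pow 2)).sqrt.measurable))).aestronglyMeasurable
  have h01 : IntervalIntegrable (fun t => q.eval t / √(1 - t^2)) volume 0 1 := by
    have hb : IntervalIntegrable (fun x : ℝ => M * (1 - x) ^ (-(1/2) : ℝ)) volume 0 1 := by
      have := ((intervalIntegrable_rpow' (a := 0) (b := 1) (r := -(1/2))
        (by norm_num)).comp_sub_left 1).symm
      simpa using this.const_mul M
    refine hb.mono_fun (hmeas 0 1) ?_
    filter_upwards [ae_restrict_mem measurableSet_uIoc] with x hx
    rw [uIoc_of_le (by norm_num : (0:ℝ) ≤ 1)] at hx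
    obtain ⟨hx0, hx1⟩ := hx
    have h1x : (0:ℝ) ≤ 1 - x := by linarith
    have hrpow : (1 - x) ^ (-(1/2) : ℝ) = (√(1 - x))⁻¹ := by
      rw [Real.rpow_neg h1x, Real.sqrt_eq_rpow]
    have hRHS : ‖M * (1 - x) ^ (-(1/2) : ℝ)‖ = M * (1-x) ^ (-(1/2):ℝ) :=
      abs_of_nonneg (mul_nonneg hM0 (Real.rpow_nonneg h1x _))
    rw [hRHS, hrpow, ← div_eq_mul_inv]
    rcases eq_or_lt_of_le hx1 with h|h
    · subst h; norm_num
    · have hsx : 0 < √(1-x) := Real.sqrt_pos.2 (by linarith)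
      have hle : √(1-x) ≤ √(1-x^2) := Real.sqrt_le_sqrt (by nlinarith)
      rw [norm_div, Real.norm_eq_abs (√(1-x^2)), abs_of_nonneg (Real.sqrt_nonneg _)]
      exact div_le_div₀ hM0 (hM x ⟨by linarith, hx1⟩) hsx hle
  have hm0 : IntervalIntegrable (fun t => q.eval t / √(1 - t^2)) volume (-1) 0 := by
    have hb : IntervalIntegrable (fun x : ℝ => M * (1 + x) ^ (-(1/2) : ℝ)) volume (-1) 0 := by
      have := ((intervalIntegrable_rpow' (a := 0) (b := 1) (r := -(1/2))
        (by norm_num)).comp_add_right 1)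
      norm_num at this
      have h2 := this.const_mul M
      have : (fun x : ℝ => M * (1 + x) ^ (-(1/2) : ℝ)) = fun x : ℝ => M * (x + 1) ^ (-(1/2) : ℝ) := by
        funext x; rw [add_comm]
      rw [this]; exact h2
    refine hb.mono_fun (hmeas (-1) 0) ?_
    filter_upwards [ae_restrict_mem measurableSet_uIoc] with x hx
    rw [uIoc_of_le (by norm_num : (-1:ℝ) ≤ 0)] at hx
    obtain ⟨hx0, hx1⟩ := hx
    have h1x : (0:ℝ) ≤ 1 + x := by linarith
    have hrpow : (1 + x) ^ (-(1/2) : ℝ) = (√(1 + x))⁻¹ := by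
      rw [Real.rpow_neg h1x, Real.sqrt_eq_rpow]
    have hRHS : ‖M * (1 + x) ^ (-(1/2) : ℝ)‖ = M * (1+x) ^ (-(1/2):ℝ) :=
      abs_of_nonneg (mul_nonneg hM0 (Real.rpow_nonneg h1x _))
    rw [hRHS, hrpow, ← div_eq_mul_inv]
    have hsx : 0 < √(1+x) := Real.sqrt_pos.2 (by linarith)
    have hle : √(1+x) ≤ √(1-x^2) := Real.sqrt_le_sqrt (by nlinarith)
    rw [norm_div, Real.norm_eq_abs (√(1-x^2)), abs_of_nonneg (Real.sqrt_nonneg _)]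
    exact div_le_div₀ hM0 (hM x ⟨le_of_lt hx0, by linarith⟩) hsx hle
  exact hm0.trans h01

lemma cheb_subst (q : ℝ[X]) :
    ∫ t in (-1:ℝ)..1, q.eval t / √(1 - t^2) = ∫ θ in (0:ℝ)..π, q.eval (Real.cos θ) := by
  set g : ℝ → ℝ := fun t => q.eval t / √(1 - t^2) with hg
  have hmin : (0:ℝ) ⊓ π = 0 := min_eq_left pi_pos.le
  have hmax : (0:ℝ) ⊔ π = π := max_eq_right pi_pos.le
  -- pointwise identity away from endpoints
  have key : ∀ x ∈ Icc (0:ℝ) π, x ≠ 0 → x ≠ π → (-Real.sin x) • (g ∘ Real.cos) x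
      = -(q.eval (Real.cos x)) := by
    intro x hx h0 hpi
    have hsin : 0 < Real.sin x :=
      Real.sin_pos_of_pos_of_lt_pi (lt_of_le_of_ne hx.1 (Ne.symm h0)) (lt_of_le_of_ne hx.2 hpi)
    have hsq : √(1 - Real.cos x ^ 2) = Real.sin x := by
      rw [← Real.sin_sq x, Real.sqrt_sq hsin.le]
    simp only [Function.comp, hg, smul_eq_mul, hsq]
    field_simp
  have hE : volume ({0, π} : Set ℝ) = 0 :=
    (Set.toFinite _).measure_zero volume
  have haeIoc : ∀ᵐ x ∂(volume : Measure ℝ), x ∈ Ι (0:ℝ) π →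
      (-Real.sin x) • (g ∘ Real.cos) x = -(q.eval (Real.cos x)) := by
    filter_upwards [(measure_eq_zero_iff_ae_notMem).1 hE] with x hne hx
    rw [uIoc_of_le pi_pos.le] at hx
    exact key x ⟨hx.1.le, hx.2⟩ (fun h => hne (by simp [h])) (fun h => hne (by simp [h]))
  have haeIcc : (fun x => (-Real.sin x) • (g ∘ Real.cos) x)
      =ᶠ[ae (volume.restrict (uIcc (0:ℝ) π))] (fun x => -(q.eval (Real.cos x))) := by
    have h1 : ∀ᵐ x ∂(volume.restrict (uIcc (0:ℝ) π)), x ∉ ({0, π} : Set ℝ) :=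
      ae_restrict_of_ae ((measure_eq_zero_iff_ae_notMem).1 hE)
    filter_upwards [ae_restrict_mem measurableSet_uIcc, h1] with x hx hne
    rw [uIcc_of_le pi_pos.le] at hx
    exact key x hx (fun h => hne (by simp [h])) (fun h => hne (by simp [h]))
  have h := integral_comp_smul_deriv''' (a := (0:ℝ)) (b := π) (f := Real.cos)
    (f' := fun x => -Real.sin x) (g := g)
    Real.continuous_cos.continuousOn
    (by intro x hx; exact (Real.hasDerivAt_cos x).hasDerivWithinAt)
    (by -- ContinuousOn g (cos '' Ioo …)
      rw [hmin, hmax]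
      have hs : Real.cos '' Ioo 0 π ⊆ Ioo (-1:ℝ) 1 := by
        rintro _ ⟨x, hx, rfl⟩
        constructor
        · have := Real.strictAntiOn_cos ⟨hx.1.le, hx.2.le⟩
            (right_mem_Icc.2 pi_pos.le) hx.2
          simpa using this
        · have := Real.strictAntiOn_cos (left_mem_Icc.2 pi_pos.le)
            ⟨hx.1.le, hx.2.le⟩ hx.1
          simpa using this
      refine ContinuousOn.mono ?_ hs
      refine ContinuousOn.div (q.continuous.continuousOn)
        ((continuous_const.sub (continuous_pow 2)).sqrt.continuousOn) ?_
      intro t ht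
      have : 0 < 1 - t^2 := by nlinarith [ht.1, ht.2]
      exact ne_of_gt (Real.sqrt_pos.2 this)
      )
    (by -- IntegrableOn g (cos '' uIcc 0 π)
      have hsub : Real.cos '' uIcc 0 π ⊆ Icc (-1:ℝ) 1 := by
        rintro _ ⟨x, _, rfl⟩
        exact ⟨Real.neg_one_le_cos x, Real.cos_le_one x⟩
      exact (((intervalIntegrable_iff_integrableOn_Icc_of_le (by norm_num : (-1:ℝ) ≤ 1)).1
        (poly_div_sqrt_intable q))).mono_set hsub)
    (by -- IntegrableOn (fun x => -sin x • (g ∘ cos) x) (uIcc 0 π)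
      have hcont : Continuous fun x : ℝ => -(q.eval (Real.cos x)) :=
        (q.continuous.comp Real.continuous_cos).neg
      exact (hcont.integrableOn_uIcc).congr_fun_ae haeIcc.symm)
  rw [Real.cos_zero, Real.cos_pi] at h
  have h2 : ∫ x in (0:ℝ)..π, (-Real.sin x) • (g ∘ Real.cos) x
      = ∫ x in (0:ℝ)..π, -(q.eval (Real.cos x)) :=
    intervalIntegral.integral_congr_ae haeIoc
  have h3 : ∫ t in (-1:ℝ)..1, g t = - ∫ t in (1:ℝ)..(-1), g t :=
    intervalIntegral.integral_symm 1 (-1)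
  rw [intervalIntegral.integral_neg] at h2
  show ∫ t in (-1:ℝ)..1, g t = _
  rw [h3, ← h, h2, neg_neg]

lemma int_cos_nat (m : ℕ) : ∫ θ in (0:ℝ)..π, Real.cos (m*θ) = if m = 0 then π else 0 := by
  rcases eq_or_ne m 0 with h|h
  · simp [h]
  · have hder : ∀ θ : ℝ, HasDerivAt (fun θ : ℝ => Real.sin (m*θ) / m) (Real.cos (m*θ)) θ := by
      intro θ
      have h1 : HasDerivAt (fun θ : ℝ => (m:ℝ)*θ) m θ := by
        simpa using (hasDerivAt_id θ).const_mul (m:ℝ)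
      have h2 := (Real.hasDerivAt_sin ((m:ℝ)*θ)).comp θ h1
      have h3 := h2.div_const (m:ℝ)
      have hm : (m:ℝ) ≠ 0 := Nat.cast_ne_zero.2 h
      simpa [mul_div_assoc, mul_div_cancel_right₀, hm] using h3
    have hint : IntervalIntegrable (fun θ : ℝ => Real.cos (m*θ)) volume 0 π :=
      (Real.continuous_cos.comp (continuous_const.mul continuous_id)).intervalIntegrable _ _
    rw [intervalIntegral.integral_eq_sub_of_hasDerivAt (fun θ _ => hder θ) hint]
    simp [Real.sin_nat_mul_pi, h]

lemma int_coscos_aux (i j : ℕ) (hji : j ≤ i) :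
    ∫ θ in (0:ℝ)..π, Real.cos (i*θ) * Real.cos (j*θ)
      = if i = j then (if i = 0 then π else π/2) else 0 := by
  have hident : ∀ θ : ℝ, Real.cos (i*θ) * Real.cos (j*θ)
      = (Real.cos (((i-j : ℕ):ℝ)*θ) + Real.cos (((i+j : ℕ):ℝ)*θ))/2 := by
    intro θ
    have h1 : ((i-j:ℕ):ℝ)*θ = (i:ℝ)*θ - (j:ℝ)*θ := by
      push_cast [Nat.cast_sub hji]; ring
    have h2 : ((i+j:ℕ):ℝ)*θ = (i:ℝ)*θ + (j:ℝ)*θ := by push_cast; ring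
    rw [h1, h2, Real.cos_sub, Real.cos_add]
    ring
  rw [intervalIntegral.integral_congr (fun θ _ => hident θ)]
  have hci : ∀ m : ℕ, IntervalIntegrable (fun θ : ℝ => Real.cos (m*θ)) volume 0 π :=
    fun m => (Real.continuous_cos.comp (continuous_const.mul continuous_id)).intervalIntegrable _ _
  rw [intervalIntegral.integral_div, intervalIntegral.integral_add (hci _) (hci _),
    int_cos_nat, int_cos_nat]
  rcases eq_or_ne i j with h|h
  · subst h
    rcases eq_or_ne i 0 with h0|h0
    · simp [h0]
    · simp [h0, Nat.sub_self]
      try ring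
  · have h1 : i - j ≠ 0 := fun hc => h (le_antisymm (Nat.le_of_sub_eq_zero hc) hji)
    have h2 : i + j ≠ 0 := by
      rcases Nat.eq_zero_or_pos i with h0|h0
      · exact absurd (le_antisymm (h0 ▸ hji) (h0 ▸ Nat.zero_le j)).symm (h0 ▸ h)
      · positivity
    simp [h1, h2, h]
    omega

lemma int_coscos (i j : ℕ) :
    ∫ θ in (0:ℝ)..π, Real.cos (i*θ) * Real.cos (j*θ)
      = if i = j then (if i = 0 then π else π/2) else 0 := by
  rcases le_total j i with h|h
  · exact int_coscos_aux i j h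
  · have h2 := int_coscos_aux j i h
    rw [show (∫ θ in (0:ℝ)..π, Real.cos (i*θ) * Real.cos (j*θ))
        = ∫ θ in (0:ℝ)..π, Real.cos (j*θ) * Real.cos (i*θ) from
      intervalIntegral.integral_congr (fun θ _ => mul_comm _ _), h2]
    by_cases hij : i = j <;> simp [hij, eq_comm]

noncomputable def nrm (j : ℕ) : ℝ := if j = 0 then (√π)⁻¹ else (√(π/2))⁻¹

lemma nrm_pos (j : ℕ) : 0 < nrm j := by
  unfold nrm
  split_ifs
  · exact inv_pos.2 (Real.sqrt_pos.2 pi_pos)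
  · exact inv_pos.2 (Real.sqrt_pos.2 (by positivity))

lemma ThatP_eq (j : ℕ) : ThatP j = Polynomial.C (nrm j) * Polynomial.Chebyshev.T ℝ (j:ℤ) := by
  unfold ThatP nrm
  split_ifs <;> rfl

lemma ThatP_eval_cos (j : ℕ) (θ : ℝ) :
    (ThatP j).eval (Real.cos θ) = nrm j * Real.cos (j*θ) := by
  rw [ThatP_eq]
  simp [Polynomial.Chebyshev.T_real_cos]

lemma ortho (i j : ℕ) :
    ∫ θ in (0:ℝ)..π, (ThatP i).eval (Real.cos θ) * (ThatP j).eval (Real.cos θ)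
      = if i = j then 1 else 0 := by
  have : ∀ θ : ℝ, (ThatP i).eval (Real.cos θ) * (ThatP j).eval (Real.cos θ)
      = (nrm i * nrm j) * (Real.cos (i*θ) * Real.cos (j*θ)) := by
    intro θ; rw [ThatP_eval_cos, ThatP_eval_cos]; ring
  rw [intervalIntegral.integral_congr (fun θ _ => this θ),
    intervalIntegral.integral_const_mul, int_coscos]
  rcases eq_or_ne i j with h|h
  · subst h
    rcases eq_or_ne i 0 with h0|h0
    · simp [h0, nrm]
      rw [← mul_inv, Real.mul_self_sqrt pi_pos.le, inv_mul_cancel₀ pi_pos.ne']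
    · simp [h0, nrm]
      rw [div_mul_div_comm, Real.mul_self_sqrt (by norm_num), Real.mul_self_sqrt pi_pos.le]
      field_simp
  · simp [h]

lemma chebT_deg : ∀ n : ℕ, (Polynomial.Chebyshev.T ℝ (n:ℤ)).natDegree ≤ n ∧
    (Polynomial.Chebyshev.T ℝ (n:ℤ)).coeff n = (if n = 0 then 1 else 2^(n-1)) := by
  intro n
  induction n using Nat.strong_induction_on with
  | _ n ih =>
    match n with
    | 0 => simp [Polynomial.Chebyshev.T_zero]
    | 1 => simp [Polynomial.Chebyshev.T_one]
    | (m+2) =>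
      have hrec : Polynomial.Chebyshev.T ℝ ((m+2 : ℕ) : ℤ)
          = 2 * Polynomial.X * Polynomial.Chebyshev.T ℝ ((m+1 : ℕ) : ℤ)
            - Polynomial.Chebyshev.T ℝ (m : ℤ) := by
        push_cast
        exact Polynomial.Chebyshev.T_add_two ℝ m
      obtain ⟨hd1, hc1⟩ := ih (m+1) (by omega)
      obtain ⟨hd0, hc0⟩ := ih m (by omega)
      constructor
      · rw [hrec]
        refine le_trans (Polynomial.natDegree_sub_le _ _) ?_
        simp only [max_le_iff]
        refine ⟨?_, le_trans hd0 (by omega)⟩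
        refine le_trans (Polynomial.natDegree_mul_le) ?_
        have : (2 * Polynomial.X : Polynomial ℝ).natDegree ≤ 1 := by
          refine le_trans (Polynomial.natDegree_mul_le) ?_
          simp
        omega
      · rw [hrec]
        rw [Polynomial.coeff_sub]
        have hz : (Polynomial.Chebyshev.T ℝ (m:ℤ)).coeff (m+2) = 0 :=
          Polynomial.coeff_eq_zero_of_natDegree_lt (lt_of_le_of_lt hd0 (by omega))
        have : (2 * Polynomial.X * Polynomial.Chebyshev.T ℝ ((m+1:ℕ):ℤ)).coeff (m+2)
            = 2 * (Polynomial.Chebyshev.T ℝ ((m+1:ℕ):ℤ)).coeff (m+1) := by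
          rw [show (2 * Polynomial.X * Polynomial.Chebyshev.T ℝ ((m+1:ℕ):ℤ))
              = 2 * (Polynomial.X * Polynomial.Chebyshev.T ℝ ((m+1:ℕ):ℤ)) by ring]
          rw [show ((2:Polynomial ℝ)) = Polynomial.C 2 by rw [map_ofNat] ]
          rw [Polynomial.coeff_C_mul]
          rw [show m+2 = (m+1)+1 from rfl, Polynomial.coeff_X_mul]
        rw [this, hz, hc1]
        simp
        ring

lemma span_T : ∀ (k : ℕ) (p : Polynomial ℝ), p.natDegree ≤ k →
    ∃ c : ℕ → ℝ, p = ∑ j ∈ range (k+1), Polynomial.C (c j) * Polynomial.Chebyshev.T ℝ (j:ℤ) := by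
  intro k
  induction k with
  | zero =>
    intro p hp
    refine ⟨fun _ => p.coeff 0, ?_⟩
    rw [Polynomial.eq_C_of_natDegree_le_zero hp]
    simp [Polynomial.Chebyshev.T_zero]
  | succ k ih =>
    intro p hp
    set a := p.coeff (k+1) / 2^k with ha
    set q := p - Polynomial.C a * Polynomial.Chebyshev.T ℝ ((k+1 : ℕ):ℤ) with hq
    have hdq : q.natDegree ≤ k := by
      rw [Polynomial.natDegree_le_iff_coeff_eq_zero]
      intro N hN
      rw [hq, Polynomial.coeff_sub, Polynomial.coeff_C_mul]
      rcases eq_or_lt_of_le (Nat.succ_le_of_lt hN) with h|h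
      · rw [← h, (chebT_deg (k+1)).2]
        simp only [ha, Nat.add_eq_zero, and_false, if_false, Nat.add_sub_cancel]
        field_simp
        simp
      · have h1 : p.coeff N = 0 :=
          Polynomial.coeff_eq_zero_of_natDegree_lt (lt_of_le_of_lt hp h)
        have h2 : (Polynomial.Chebyshev.T ℝ ((k+1:ℕ):ℤ)).coeff N = 0 :=
          Polynomial.coeff_eq_zero_of_natDegree_lt (lt_of_le_of_lt (chebT_deg (k+1)).1 h)
        rw [h1, h2]; ring
    obtain ⟨c, hc⟩ := ih q hdq
    refine ⟨fun j => if j = k+1 then a else c j, ?_⟩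
    rw [Finset.sum_range_succ]
    have : ∑ j ∈ range (k+1), Polynomial.C (if j = k+1 then a else c j)
        * Polynomial.Chebyshev.T ℝ (j:ℤ)
        = ∑ j ∈ range (k+1), Polynomial.C (c j) * Polynomial.Chebyshev.T ℝ (j:ℤ) := by
      refine Finset.sum_congr rfl fun j hj => ?_
      have : j ≠ k+1 := by
        intro h; subst h; exact absurd (Finset.mem_range.1 hj) (by omega)
      simp [this]
    rw [this, ← hc]
    simp [hq]

lemma span_That (k : ℕ) (p : Polynomial ℝ) (hp : p.natDegree ≤ k) :
    ∃ c : ℕ → ℝ, p = ∑ j ∈ range (k+1), Polynomial.C (c j) * ThatP j := by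
  obtain ⟨c, hc⟩ := span_T k p hp
  refine ⟨fun j => c j / nrm j, ?_⟩
  rw [hc]
  refine Finset.sum_congr rfl fun j _ => ?_
  rw [ThatP_eq, ← mul_assoc, ← Polynomial.C_mul, div_mul_cancel₀ _ (nrm_pos j).ne']

lemma ThatP_cont (j : ℕ) : Continuous fun θ : ℝ => (ThatP j).eval (Real.cos θ) :=
  (ThatP j).continuous.comp Real.continuous_cos

lemma IP_sum (k : ℕ) (c : ℕ → ℝ) :
    ∫ θ in (0:ℝ)..π, ((∑ j ∈ range (k+1), Polynomial.C (c j) * ThatP j).eval (Real.cos θ))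
      * ((∑ j ∈ range (k+1), Polynomial.C (c j) * ThatP j).eval (Real.cos θ))
    = ∑ j ∈ range (k+1), (c j)^2 := by
  have heval : ∀ x : ℝ, (∑ j ∈ range (k+1), Polynomial.C (c j) * ThatP j).eval x
      = ∑ j ∈ range (k+1), c j * (ThatP j).eval x := by
    intro x; simp [Polynomial.eval_finset_sum]
  have hident : ∀ θ : ℝ,
      ((∑ j ∈ range (k+1), Polynomial.C (c j) * ThatP j).eval (Real.cos θ))
        * ((∑ j ∈ range (k+1), Polynomial.C (c j) * ThatP j).eval (Real.cos θ))
      = ∑ i ∈ range (k+1), ∑ j ∈ range (k+1),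
          (c i * c j) * ((ThatP i).eval (Real.cos θ) * (ThatP j).eval (Real.cos θ)) := by
    intro θ
    rw [heval, Finset.sum_mul_sum]
    refine Finset.sum_congr rfl fun i _ => Finset.sum_congr rfl fun j _ => by ring
  rw [intervalIntegral.integral_congr (fun θ _ => hident θ)]
  have hint1 : ∀ i ∈ range (k+1), IntervalIntegrable (fun θ : ℝ => ∑ j ∈ range (k+1),
      (c i * c j) * ((ThatP i).eval (Real.cos θ) * (ThatP j).eval (Real.cos θ)))
      MeasureTheory.volume 0 π := by
    intro i _
    exact (continuous_finset_sum _ (fun j _ =>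
      continuous_const.mul ((ThatP_cont i).mul (ThatP_cont j)))).intervalIntegrable _ _
  rw [intervalIntegral.integral_finset_sum hint1]
  have : ∀ i ∈ range (k+1),
      (∫ θ in (0:ℝ)..π, ∑ j ∈ range (k+1),
        (c i * c j) * ((ThatP i).eval (Real.cos θ) * (ThatP j).eval (Real.cos θ)))
      = (c i)^2 := by
    intro i hi
    rw [intervalIntegral.integral_finset_sum (f := fun j θ =>
      (c i * c j) * ((ThatP i).eval (Real.cos θ) * (ThatP j).eval (Real.cos θ))) (fun j _ =>
      ((continuous_const.mul ((ThatP_cont i).mul (ThatP_cont j)))).intervalIntegrable _ _)]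
    have : ∀ j ∈ range (k+1),
        (∫ θ in (0:ℝ)..π, (c i * c j) * ((ThatP i).eval (Real.cos θ) * (ThatP j).eval (Real.cos θ)))
        = if i = j then c i * c j else 0 := by
      intro j _
      rw [intervalIntegral.integral_const_mul, ortho]
      split_ifs <;> simp
    rw [Finset.sum_congr rfl this, Finset.sum_ite_eq]
    simp [Finset.mem_range.1 hi, sq]
  rw [Finset.sum_congr rfl this]

lemma chebNorm_IP (p : Polynomial ℝ) :
    chebNorm p = √(∫ θ in (0:ℝ)..π, p.eval (Real.cos θ) * p.eval (Real.cos θ)) := by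
  unfold chebNorm
  congr 1
  have h1 : ∀ t : ℝ, (p.eval t)^2 / √(1 - t^2) = (p*p).eval t / √(1 - t^2) := by
    intro t; rw [Polynomial.eval_mul, sq]
  rw [intervalIntegral.integral_congr (fun t _ => h1 t), cheb_subst (p*p)]
  refine intervalIntegral.integral_congr fun θ _ => ?_
  rw [Polynomial.eval_mul]

end Helpers

/-- The kernel polynomial `ρ̂_k` is the unique polynomial of degree at most `k` with
`ρ̂_k(γ) = 1` minimizing the Chebyshev `L²`-norm over polynomials `r` of degree `≤ k`
with `r(γ) = 1`. -/
theorem kernel_polynomial_is_unique_minimizer (k : ℕ) (γ : ℝ) (hγ : γ ∈ Set.Ioo (-1:ℝ) 1) :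
    (rhoHat k γ).natDegree ≤ k ∧ (rhoHat k γ).eval γ = 1 ∧
    (∀ r : Polynomial ℝ, r.natDegree ≤ k → r.eval γ = 1 →
      chebNorm (rhoHat k γ) ≤ chebNorm r) ∧
    (∀ r : Polynomial ℝ, r.natDegree ≤ k → r.eval γ = 1 →
      (∀ s : Polynomial ℝ, s.natDegree ≤ k → s.eval γ = 1 → chebNorm r ≤ chebNorm s) →
      r = rhoHat k γ) := by
  set a : ℕ → ℝ := fun j => (ThatP j).eval γ with ha
  set S : ℝ := ∑ j ∈ range (k+1), a j ^ 2 with hS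
  have hSpos : 0 < S := by
    refine Finset.sum_pos' (fun j _ => sq_nonneg _) ⟨0, Finset.mem_range.2 (by omega), ?_⟩
    have : a 0 = nrm 0 := by
      rw [ha]; simp [ThatP_eq, Polynomial.Chebyshev.T_zero]
    rw [this]; exact pow_pos (nrm_pos 0) 2
  -- expansion of rhoHat
  have hrho : rhoHat k γ = ∑ j ∈ range (k+1), Polynomial.C (S⁻¹ * a j) * ThatP j := by
    unfold rhoHat
    rw [Finset.mul_sum]
    refine Finset.sum_congr rfl fun j _ => ?_
    rw [← mul_assoc, ← Polynomial.C_mul]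
  -- eval of a coefficient-sum
  have hevalsum : ∀ c : ℕ → ℝ,
      (∑ j ∈ range (k+1), Polynomial.C (c j) * ThatP j).eval γ
        = ∑ j ∈ range (k+1), c j * a j := by
    intro c; simp [Polynomial.eval_finset_sum, ha]
  have hdeg : (rhoHat k γ).natDegree ≤ k := by
    rw [hrho]
    refine Polynomial.natDegree_sum_le_of_forall_le _ _ fun j hj => ?_
    refine le_trans (Polynomial.natDegree_mul_le) ?_
    have h1 : (ThatP j).natDegree ≤ j := by
      rw [ThatP_eq]
      refine le_trans (Polynomial.natDegree_mul_le) ?_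
      simp [(chebT_deg j).1]
    simp only [Polynomial.natDegree_C, zero_add]
    exact le_trans h1 (Nat.lt_succ_iff.1 (Finset.mem_range.1 hj))
  have heval1 : (rhoHat k γ).eval γ = 1 := by
    rw [hrho, hevalsum]
    have : ∀ j ∈ range (k+1), S⁻¹ * a j * a j = S⁻¹ * a j ^2 := fun j _ => by ring
    rw [Finset.sum_congr rfl this, ← Finset.mul_sum, ← hS, inv_mul_cancel₀ hSpos.ne']
  have hIPrho : (∫ θ in (0:ℝ)..π,
      (rhoHat k γ).eval (Real.cos θ) * (rhoHat k γ).eval (Real.cos θ)) = S⁻¹ := by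
    rw [hrho, IP_sum]
    have : ∀ j ∈ range (k+1), (S⁻¹ * a j)^2 = S⁻¹^2 * a j ^2 := fun j _ => by ring
    rw [Finset.sum_congr rfl this, ← Finset.mul_sum, ← hS]
    rw [sq]
    field_simp
  -- key inequality for any admissible r with coefficients c
  have key : ∀ c : ℕ → ℝ, (∑ j ∈ range (k+1), c j * a j) = 1 →
      S⁻¹ + ∑ j ∈ range (k+1), (c j - S⁻¹ * a j)^2 = ∑ j ∈ range (k+1), (c j)^2 := by
    intro c hc
    have expand : ∀ j ∈ range (k+1),
        (c j - S⁻¹ * a j)^2 = (c j)^2 - 2 * S⁻¹ * (c j * a j) + S⁻¹^2 * a j^2 :=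
      fun j _ => by ring
    rw [Finset.sum_congr rfl expand]
    rw [Finset.sum_add_distrib, Finset.sum_sub_distrib, ← Finset.mul_sum, ← Finset.mul_sum,
      ← hS, hc]
    have h1 : S⁻¹^2 * S = S⁻¹ := by rw [sq]; field_simp
    rw [h1]
    ring
  refine ⟨hdeg, heval1, ?_, ?_⟩
  · intro r hrdeg hr1
    obtain ⟨c, hc⟩ := span_That k r hrdeg
    have hcsum : (∑ j ∈ range (k+1), c j * a j) = 1 := by
      rw [← hevalsum c, ← hc, hr1]
    have hIPr : (∫ θ in (0:ℝ)..π, r.eval (Real.cos θ) * r.eval (Real.cos θ))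
        = ∑ j ∈ range (k+1), (c j)^2 := by rw [hc, IP_sum]
    rw [chebNorm_IP, chebNorm_IP, hIPrho, hIPr]
    refine Real.sqrt_le_sqrt ?_
    rw [← key c hcsum]
    have : 0 ≤ ∑ j ∈ range (k+1), (c j - S⁻¹ * a j)^2 :=
      Finset.sum_nonneg fun j _ => sq_nonneg _
    linarith
  · intro r hrdeg hr1 hmin
    obtain ⟨c, hc⟩ := span_That k r hrdeg
    have hcsum : (∑ j ∈ range (k+1), c j * a j) = 1 := by
      rw [← hevalsum c, ← hc, hr1]
    have hIPr : (∫ θ in (0:ℝ)..π, r.eval (Real.cos θ) * r.eval (Real.cos θ))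
        = ∑ j ∈ range (k+1), (c j)^2 := by rw [hc, IP_sum]
    have hle1 : chebNorm r ≤ chebNorm (rhoHat k γ) := hmin _ hdeg heval1
    have hle2 : chebNorm (rhoHat k γ) ≤ chebNorm r := by
      rw [chebNorm_IP, chebNorm_IP, hIPrho, hIPr]
      refine Real.sqrt_le_sqrt ?_
      rw [← key c hcsum]
      have : 0 ≤ ∑ j ∈ range (k+1), (c j - S⁻¹ * a j)^2 :=
        Finset.sum_nonneg fun j _ => sq_nonneg _
      linarith
    have heq : (∑ j ∈ range (k+1), (c j)^2) = S⁻¹ := by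
      have h3 : chebNorm r = chebNorm (rhoHat k γ) := le_antisymm hle1 hle2
      rw [chebNorm_IP, chebNorm_IP, hIPrho, hIPr] at h3
      have h4 : 0 ≤ ∑ j ∈ range (k+1), (c j)^2 := Finset.sum_nonneg fun j _ => sq_nonneg _
      have h5 : 0 ≤ S⁻¹ := (inv_pos.2 hSpos).le
      rw [← Real.sq_sqrt h4, ← Real.sq_sqrt h5, h3]
    have hzero : (∑ j ∈ range (k+1), (c j - S⁻¹ * a j)^2) = 0 := by
      have := key c hcsum
      rw [heq] at this
      linarith
    have hcj : ∀ j ∈ range (k+1), c j = S⁻¹ * a j := by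
      intro j hj
      have h6 := (Finset.sum_eq_zero_iff_of_nonneg (fun j _ => sq_nonneg _)).1 hzero j hj
      have := pow_eq_zero_iff (n := 2) (by omega) |>.1 h6
      linarith [sub_eq_zero.1 this]
    rw [hc, hrho]
    exact Finset.sum_congr rfl fun j hj => by rw [hcj j hj]
end

section
/- Let ρ̂_k be the kernel polynomial of degree k centered at γ ∈ (−1,1) (so ρ̂_k(γ)=1 and ρ̂_k minimizes the Chebyshev L²-norm among degree-≤k polynomials equal to 1 at γ). Fix a point ξ ∈ (−1,1) with ξ ≠ γ. Then it is not the case that |ρ̂_k(ξ)| ≥ ε for some fixed ε > 0 and all sufficiently large k; i.e., lim inf_{k→∞} |ρ̂_k(ξ)| = 0. -/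
open Real Polynomial Finset

/-- Dirichlet-type bound: sums `∑ cos((i+1)θ)` are uniformly bounded when
`sin(θ/2) ≠ 0`. -/
lemma dirichlet_bound (θ : ℝ) (hs : Real.sin (θ / 2) ≠ 0) (k : ℕ) :
    |∑ i ∈ Finset.range k, Real.cos (((i : ℝ) + 1) * θ)| ≤ 1 / |Real.sin (θ / 2)| := by
  have habs : 0 < |Real.sin (θ / 2)| := abs_pos.mpr hs
  have key : 2 * Real.sin (θ / 2) * ∑ i ∈ Finset.range k, Real.cos (((i : ℝ) + 1) * θ)
      = Real.sin (((k : ℝ) + 1 / 2) * θ) - Real.sin (((0 : ℕ) + 1 / 2) * θ) := by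
    rw [Finset.mul_sum,
      ← Finset.sum_range_sub (fun i : ℕ => Real.sin (((i : ℝ) + 1 / 2) * θ)) k]
    refine Finset.sum_congr rfl fun i _ => ?_
    rw [Real.sin_sub_sin]
    push_cast
    have h1 : ((((i : ℝ) + 1) + 1 / 2) * θ - ((i : ℝ) + 1 / 2) * θ) / 2 = θ / 2 := by ring
    have h2 : ((((i : ℝ) + 1) + 1 / 2) * θ + ((i : ℝ) + 1 / 2) * θ) / 2 = ((i : ℝ) + 1) * θ := by
      ring
    rw [h1, h2]
  have hS : ∑ i ∈ Finset.range k, Real.cos (((i : ℝ) + 1) * θ)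
      = (Real.sin (((k : ℝ) + 1 / 2) * θ) - Real.sin (((0 : ℕ) + 1 / 2) * θ))
        / (2 * Real.sin (θ / 2)) := by
    rw [← key]
    rw [mul_div_cancel_left₀ _ (mul_ne_zero two_ne_zero hs)]
  rw [hS, abs_div, abs_mul, abs_two]
  have hnum : |Real.sin (((k : ℝ) + 1 / 2) * θ) - Real.sin (((0 : ℕ) + 1 / 2) * θ)| ≤ 2 := by
    calc |Real.sin (((k : ℝ) + 1 / 2) * θ) - Real.sin (((0 : ℕ) + 1 / 2) * θ)|
        ≤ |Real.sin (((k : ℝ) + 1 / 2) * θ)| + |Real.sin (((0 : ℕ) + 1 / 2) * θ)| :=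
          abs_sub _ _
      _ ≤ 1 + 1 := add_le_add (Real.abs_sin_le_one _) (Real.abs_sin_le_one _)
      _ = 2 := by norm_num
  calc |Real.sin (((k : ℝ) + 1 / 2) * θ) - Real.sin (((0 : ℕ) + 1 / 2) * θ)|
        / (2 * |Real.sin (θ / 2)|)
      ≤ 2 / (2 * |Real.sin (θ / 2)|) := by gcongr
    _ = 1 / |Real.sin (θ / 2)| := by
        field_simp

lemma ThatP_eval (j : ℕ) (θ : ℝ) :
    (ThatP j).eval (Real.cos θ) =
      (if j = 0 then (Real.sqrt Real.pi)⁻¹ else (Real.sqrt (Real.pi / 2))⁻¹)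
        * Real.cos ((j : ℝ) * θ) := by
  unfold ThatP
  have hT : (Polynomial.Chebyshev.T ℝ (j : ℤ)).eval (Real.cos θ) = Real.cos ((j : ℝ) * θ) := by
    rw [Polynomial.Chebyshev.T_real_cos]
    push_cast
    ring_nf
  split <;> simp [hT]

/-- At a fixed point `ξ ≠ γ` in `(−1,1)`, the values `|ρ̂_k(ξ)|` of the kernel
polynomials cannot stay bounded away from zero for all large `k`:
`liminf_{k→∞} |ρ̂_k(ξ)| = 0`. -/
theorem kernel_polynomial_liminf_zero (γ ξ : ℝ)
    (hγ : γ ∈ Set.Ioo (-1:ℝ) 1) (hξ : ξ ∈ Set.Ioo (-1:ℝ) 1) (hne : ξ ≠ γ) :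
    (¬ ∃ ε > 0, ∃ N : ℕ, ∀ k ≥ N, ε ≤ |(rhoHat k γ).eval ξ|)
    ∧ Filter.liminf (fun k : ℕ => |(rhoHat k γ).eval ξ|) Filter.atTop = 0 := by
  obtain ⟨hγ1, hγ2⟩ := hγ
  obtain ⟨hξ1, hξ2⟩ := hξ
  have hπ : (0:ℝ) < π := Real.pi_pos
  set a := Real.arccos γ with ha_def
  set b := Real.arccos ξ with hb_def
  have hca : Real.cos a = γ := Real.cos_arccos hγ1.le hγ2.le
  have hcb : Real.cos b = ξ := Real.cos_arccos hξ1.le hξ2.le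
  have ha0 : 0 < a := Real.arccos_pos.mpr hγ2
  have hb0 : 0 < b := Real.arccos_pos.mpr hξ2
  have haπ : a < π := by
    have hle : a ≤ π := Real.arccos_le_pi γ
    rcases hle.lt_or_eq with h | h
    · exact h
    · exfalso
      rw [h, Real.cos_pi] at hca
      linarith
  have hbπ : b < π := by
    have hle : b ≤ π := Real.arccos_le_pi ξ
    rcases hle.lt_or_eq with h | h
    · exact h
    · exfalso
      rw [h, Real.cos_pi] at hcb
      linarith
  have hab : a ≠ b := by
    intro h
    apply hne
    rw [← hca, ← hcb, h]
  -- positivity of the relevant sines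
  have hs3 : 0 < Real.sin a := Real.sin_pos_of_pos_of_lt_pi ha0 haπ
  have hs2 : 0 < Real.sin ((a + b) / 2) :=
    Real.sin_pos_of_pos_of_lt_pi (by linarith) (by linarith)
  have hs1 : Real.sin ((a - b) / 2) ≠ 0 := by
    intro h
    rw [Real.sin_eq_zero_iff_of_lt_of_lt (by linarith) (by linarith)] at h
    exact hab (by linarith)
  set s1 : ℝ := |Real.sin ((a - b) / 2)| with hs1_def
  have hs1pos : 0 < s1 := abs_pos.mpr hs1
  -- normalization constants
  have hc0 : ((Real.sqrt π)⁻¹) ^ 2 = 1 / π := by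
    rw [inv_pow, Real.sq_sqrt hπ.le, one_div]
  have hc1 : ((Real.sqrt (π / 2))⁻¹) ^ 2 = 2 / π := by
    rw [inv_pow, Real.sq_sqrt (by positivity : (0:ℝ) ≤ π / 2), inv_div]
  -- the denominator and numerator sums
  set D : ℕ → ℝ := fun k => ∑ j ∈ Finset.range (k + 1), (ThatP j).eval γ ^ 2 with hD_def
  set Nu : ℕ → ℝ := fun k =>
    ∑ j ∈ Finset.range (k + 1), (ThatP j).eval γ * (ThatP j).eval ξ with hNu_def
  have heval : ∀ k : ℕ, (rhoHat k γ).eval ξ = (D k)⁻¹ * Nu k := by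
    intro k
    simp [rhoHat, hD_def, hNu_def, Polynomial.eval_finset_sum]
  -- closed forms
  have hD : ∀ k : ℕ, D k
      = (1 + (k : ℝ) + ∑ i ∈ Finset.range k, Real.cos (((i : ℝ) + 1) * (2 * a))) / π := by
    intro k
    have hDk : D k = ∑ j ∈ Finset.range (k + 1), ((ThatP j).eval (Real.cos a)) ^ 2 := by
      rw [hca]
    rw [hDk, Finset.sum_range_succ']
    have hterm : ∀ i : ℕ, ((ThatP (i + 1)).eval (Real.cos a)) ^ 2
        = (1 + Real.cos (((i : ℝ) + 1) * (2 * a))) / π := by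
      intro i
      rw [ThatP_eval, if_neg (Nat.succ_ne_zero i), mul_pow, hc1, Real.cos_sq]
      have harg : 2 * (((i + 1 : ℕ) : ℝ) * a) = ((i : ℝ) + 1) * (2 * a) := by
        push_cast; ring
      rw [harg]
      push_cast
      field_simp
    have h0 : ((ThatP 0).eval (Real.cos a)) ^ 2 = 1 / π := by
      rw [ThatP_eval, if_pos rfl]
      norm_num [hc0]
    rw [h0]
    rw [Finset.sum_congr rfl fun i _ => hterm i]
    rw [← Finset.sum_div, Finset.sum_add_distrib, Finset.sum_const, Finset.card_range,
      nsmul_eq_mul, mul_one]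
    ring
  have hNu : ∀ k : ℕ, Nu k
      = (1 + (∑ i ∈ Finset.range k, Real.cos (((i : ℝ) + 1) * (a - b)))
          + ∑ i ∈ Finset.range k, Real.cos (((i : ℝ) + 1) * (a + b))) / π := by
    intro k
    have hNk : Nu k = ∑ j ∈ Finset.range (k + 1),
        ((ThatP j).eval (Real.cos a)) * ((ThatP j).eval (Real.cos b)) := by
      rw [hca, hcb]
    rw [hNk, Finset.sum_range_succ']
    have hterm : ∀ i : ℕ, ((ThatP (i + 1)).eval (Real.cos a)) * ((ThatP (i + 1)).eval (Real.cos b))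
        = (Real.cos (((i : ℝ) + 1) * (a - b)) + Real.cos (((i : ℝ) + 1) * (a + b))) / π := by
      intro i
      rw [ThatP_eval, ThatP_eval, if_neg (Nat.succ_ne_zero i)]
      have hcc : Real.cos (((i + 1 : ℕ) : ℝ) * a) * Real.cos (((i + 1 : ℕ) : ℝ) * b)
          = (Real.cos (((i : ℝ) + 1) * (a - b)) + Real.cos (((i : ℝ) + 1) * (a + b))) / 2 := by
        have h1 : ((i : ℝ) + 1) * (a - b)
            = ((i + 1 : ℕ) : ℝ) * a - ((i + 1 : ℕ) : ℝ) * b := by push_cast; ring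
        have h2 : ((i : ℝ) + 1) * (a + b)
            = ((i + 1 : ℕ) : ℝ) * a + ((i + 1 : ℕ) : ℝ) * b := by push_cast; ring
        rw [h1, h2, Real.cos_sub, Real.cos_add]
        ring
      have hsq : (Real.sqrt (π / 2))⁻¹ * Real.cos (((i + 1 : ℕ) : ℝ) * a)
            * ((Real.sqrt (π / 2))⁻¹ * Real.cos (((i + 1 : ℕ) : ℝ) * b))
          = ((Real.sqrt (π / 2))⁻¹) ^ 2
            * (Real.cos (((i + 1 : ℕ) : ℝ) * a) * Real.cos (((i + 1 : ℕ) : ℝ) * b)) := by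
        ring
      rw [hsq, hc1, hcc]
      field_simp
    have h0 : ((ThatP 0).eval (Real.cos a)) * ((ThatP 0).eval (Real.cos b)) = 1 / π := by
      rw [ThatP_eval, ThatP_eval, if_pos rfl]
      have : (Real.sqrt π)⁻¹ * Real.cos ((0 : ℝ) * a) * ((Real.sqrt π)⁻¹ * Real.cos ((0 : ℝ) * b))
          = ((Real.sqrt π)⁻¹) ^ 2 * (Real.cos ((0 : ℝ) * a) * Real.cos ((0 : ℝ) * b)) := by ring
      push_cast
      rw [this, hc0]
      norm_num
    rw [h0]
    rw [Finset.sum_congr rfl fun i _ => hterm i]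
    rw [← Finset.sum_div, Finset.sum_add_distrib]
    ring
  -- bounds
  have hs2a : Real.sin (2 * a / 2) ≠ 0 := by
    rw [show 2 * a / 2 = a by ring]; exact hs3.ne'
  have hsab1 : Real.sin ((a - b) / 2) ≠ 0 := hs1
  have hsab2 : Real.sin ((a + b) / 2) ≠ 0 := hs2.ne'
  set M : ℝ := (1 + 1 / s1 + 1 / Real.sin ((a + b) / 2)) / π with hM_def
  have hMpos : 0 < M := by
    apply div_pos _ hπ
    have : 0 < 1 / s1 := by positivity
    have : 0 < 1 / Real.sin ((a + b) / 2) := by positivity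
    positivity
  have hNbound : ∀ k : ℕ, |Nu k| ≤ M := by
    intro k
    rw [hNu k, hM_def, abs_div, abs_of_pos hπ]
    apply (div_le_div_iff_of_pos_right hπ).mpr
    calc |1 + (∑ i ∈ Finset.range k, Real.cos (((i : ℝ) + 1) * (a - b)))
            + ∑ i ∈ Finset.range k, Real.cos (((i : ℝ) + 1) * (a + b))|
        ≤ |1 + ∑ i ∈ Finset.range k, Real.cos (((i : ℝ) + 1) * (a - b))|
            + |∑ i ∈ Finset.range k, Real.cos (((i : ℝ) + 1) * (a + b))| := abs_add_le _ _
      _ ≤ (|(1:ℝ)| + |∑ i ∈ Finset.range k, Real.cos (((i : ℝ) + 1) * (a - b))|)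
            + |∑ i ∈ Finset.range k, Real.cos (((i : ℝ) + 1) * (a + b))| := by
          gcongr; exact abs_add_le _ _
      _ ≤ (1 + 1 / s1) + 1 / |Real.sin ((a + b) / 2)| := by
          gcongr
          · rw [abs_one]
          · exact dirichlet_bound (a - b) hs1 k
          · exact dirichlet_bound (a + b) hsab2 k
      _ = 1 + 1 / s1 + 1 / Real.sin ((a + b) / 2) := by
          rw [abs_of_pos hs2]
  have hDbound : ∀ k : ℕ, (1 + (k : ℝ) - 1 / Real.sin a) / π ≤ D k := by
    intro k
    rw [hD k]
    apply (div_le_div_iff_of_pos_right hπ).mpr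
    have hd := dirichlet_bound (2 * a) hs2a k
    rw [show 2 * a / 2 = a by ring, abs_of_pos hs3] at hd
    have := neg_le_of_abs_le hd
    linarith
  have hDpos : ∀ k : ℕ, 0 < D k := by
    intro k
    apply Finset.sum_pos' (fun j _ => sq_nonneg _)
    refine ⟨0, Finset.mem_range.mpr k.succ_pos, ?_⟩
    have h0 : (ThatP 0).eval γ = (Real.sqrt π)⁻¹ := by
      rw [← hca, ThatP_eval, if_pos rfl]
      norm_num
    rw [h0, inv_pow]
    positivity
  -- the sequence tends to 0
  set g : ℕ → ℝ := fun k => M / ((1 + (k : ℝ) - 1 / Real.sin a) / π) with hg_def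
  have hgtend : Filter.Tendsto g Filter.atTop (nhds 0) := by
    apply Filter.Tendsto.div_atTop (tendsto_const_nhds)
    apply Filter.Tendsto.atTop_div_const hπ
    apply Filter.tendsto_atTop_add_const_right
    apply Filter.tendsto_atTop_add_const_left
    exact tendsto_natCast_atTop_atTop
  obtain ⟨N₀, hN₀⟩ := exists_nat_ge (1 / Real.sin a)
  have hbound : ∀ k ≥ N₀, |(rhoHat k γ).eval ξ| ≤ g k := by
    intro k hk
    have hkN : (1:ℝ) ≤ 1 + (k : ℝ) - 1 / Real.sin a := by
      have : (N₀ : ℝ) ≤ (k : ℝ) := Nat.cast_le.mpr hk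
      linarith
    have hdenpos : 0 < (1 + (k : ℝ) - 1 / Real.sin a) / π := by
      apply div_pos _ hπ; linarith
    rw [heval k, abs_mul, abs_inv, abs_of_pos (hDpos k)]
    rw [inv_mul_eq_div, hg_def]
    exact div_le_div₀ hMpos.le (hNbound k) hdenpos (hDbound k)
  have htend : Filter.Tendsto (fun k : ℕ => |(rhoHat k γ).eval ξ|) Filter.atTop (nhds 0) := by
    apply squeeze_zero' (Filter.Eventually.of_forall fun k => abs_nonneg _) _ hgtend
    filter_upwards [Filter.eventually_ge_atTop N₀] with k hk
    exact hbound k hk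
  constructor
  · rintro ⟨ε, hε, N, hN⟩
    have hev := htend.eventually_lt_const hε
    rw [Filter.eventually_atTop] at hev
    obtain ⟨N', hN'⟩ := hev
    have h1 := hN (max N N') (le_max_left _ _)
    have h2 := hN' (max N N') (le_max_right _ _)
    linarith
  · exact htend.liminf_eq
end
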